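/- Let V and V̄ be real vector spaces of the same finite dimension m ≥ 2, each carrying pointwise hypersurface metric data (γ,ℓ,ℓ²) and (γ̄,ℓ̄,ℓ̄²) that is null with null generators n and n̄ respectively (and 𝒜, 𝒜̄ nondegenerate). Let U ⊂ V and Ū ⊂ V̄ be subspaces of dimension m−1 on which the restrictions h := γ|_U and h̄ := γ̄|_Ū are nondegenerate, let φ : U → Ū be a linear bijection with h̄(φ(X),φ(Y)) = h(X,Y) for all X,Y ∈ U, and let μ ∈ ℝ, μ ≠ 0. Then there exists a unique linear map Ψ : V × ℝ → V̄ × ℝ such that (1) Ψ((X,0)) = (φ(X),0) for all X ∈ U, (2) 𝒜̄(Ψ(v),Ψ(w)) = 𝒜(v,w) for all v,w ∈ V × ℝ, and (3) 𝒜̄((n̄,0), Ψ((n,0))) = μ; moreover this Ψ is invertible. -/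

import Mathlib

open Module

/-- The symmetric bilinear form `𝒜` on `V × ℝ` associated to pointwise hypersurface
metric data `(γ, ℓ, ℓ²)`. -/
noncomputable def calA {V : Type*} [AddCommGroup V] [Module ℝ V]
    (γ : V →ₗ[ℝ] V →ₗ[ℝ] ℝ) (ℓ : V →ₗ[ℝ] ℝ) (ℓ2 : ℝ) (v w : V × ℝ) : ℝ :=
  γ v.1 w.1 + v.2 * ℓ w.1 + w.2 * ℓ v.1 + v.2 * w.2 * ℓ2

private lemma side_setup {V : Type*} [AddCommGroup V] [Module ℝ V] [FiniteDimensional ℝ V]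
    (γ : V →ₗ[ℝ] V →ₗ[ℝ] ℝ) (hγsym : ∀ x y : V, γ x y = γ y x)
    (ℓ : V →ₗ[ℝ] ℝ) (ℓ2 : ℝ)
    (n : V) (hn : ∀ X : V, γ n X = 0) (hℓn : ℓ n = 1)
    (U : Submodule ℝ V) (hdim : finrank ℝ U + 1 = finrank ℝ V)
    (hUnd : ∀ x ∈ U, (∀ y ∈ U, γ x y = 0) → x = 0) :
    ∃ (σ : V →ₗ[ℝ] U) (w : V),
      (∀ X : U, σ X = X) ∧ σ n = 0 ∧
      (∀ v : V, v = (σ v : V) + (ℓ v - ℓ (σ v)) • n) ∧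
      (∀ X ∈ U, γ w X = -ℓ X) ∧ (γ w w + 2 * ℓ w + ℓ2 = 0) := by
  have hn0 : n ≠ 0 := by intro h; rw [h, map_zero] at hℓn; exact one_ne_zero hℓn.symm
  have hnU : n ∉ U := fun h => hn0 (hUnd n h fun y _ => hn y)
  have hdisj : Disjoint U (ℝ ∙ n) := by
    rw [Submodule.disjoint_def]
    intro x hxU hxn
    obtain ⟨c, rfl⟩ := Submodule.mem_span_singleton.mp hxn
    rcases eq_or_ne c 0 with rfl | hc
    · simp
    · exact absurd (by simpa [smul_smul, inv_mul_cancel₀ hc] using U.smul_mem c⁻¹ hxU) hnU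
  have hco : U ⊔ (ℝ ∙ n) = ⊤ := by
    apply Submodule.eq_top_of_finrank_eq
    have h1 := Submodule.finrank_sup_add_finrank_inf_eq U (ℝ ∙ n)
    rw [disjoint_iff.mp hdisj, finrank_bot, finrank_span_singleton hn0] at h1
    omega
  have hcompl : IsCompl U (ℝ ∙ n) := ⟨hdisj, codisjoint_iff.mpr hco⟩
  set σ := U.linearProjOfIsCompl (ℝ ∙ n) hcompl with hσ
  have hσU : ∀ X : U, σ (X : V) = X := fun X => Submodule.linearProjOfIsCompl_apply_left hcompl X
  have hσn : σ n = 0 := Submodule.linearProjOfIsCompl_apply_right' hcompl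
    (Submodule.mem_span_singleton_self n)
  have hdec : ∀ v : V, v = (σ v : V) + (ℓ v - ℓ (σ v)) • n := by
    intro v
    have hmem : v - (σ v : V) ∈ (ℝ ∙ n) := by
      rw [← Submodule.linearProjOfIsCompl_apply_eq_zero_iff hcompl]
      rw [map_sub]
      have : σ ((σ v : V)) = σ v := hσU (σ v)
      change σ v - σ (σ v : V) = 0
      rw [this, sub_self]
    obtain ⟨c, hc⟩ := Submodule.mem_span_singleton.mp hmem
    have hceq : c = ℓ v - ℓ (σ v) := by
      have := congrArg ℓ hc
      rw [map_sub, map_smul, hℓn, smul_eq_mul, mul_one] at this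
      linarith
    rw [← hceq, hc]; abel
  set B : LinearMap.BilinForm ℝ U := γ.compl₁₂ U.subtype U.subtype with hB
  have hBnd : B.Nondegenerate := by
    refine ⟨fun x hx => ?_, fun x hx => ?_⟩
    · have := hUnd x x.2 (fun y hy => hx ⟨y, hy⟩)
      exact Subtype.ext this
    · exact Subtype.ext (hUnd x x.2 (fun y hy => by rw [hγsym]; exact hx ⟨y, hy⟩))
  set f : Module.Dual ℝ U := -(ℓ.comp U.subtype) with hf
  set u : U := (B.toDual hBnd).symm f with hu
  have hu' : ∀ X : U, γ (u : V) (X : V) = -ℓ (X : V) := by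
    intro X
    have h1 : B.toDual hBnd u = f := (B.toDual hBnd).apply_symm_apply f
    have h2 : B.toDual hBnd u X = B u X := LinearMap.BilinForm.toDual_def hBnd
    rw [h1] at h2
    simpa [hf, hB, LinearMap.compl₁₂_apply] using h2.symm
  set c : ℝ := -(γ (u : V) (u : V) + 2 * ℓ (u : V) + ℓ2) / 2 with hc
  refine ⟨σ, (u : V) + c • n, hσU, hσn, hdec, ?_, ?_⟩
  · intro X hX
    have := hu' ⟨X, hX⟩
    simp only [map_add, map_smul, LinearMap.add_apply, LinearMap.smul_apply, hn, smul_eq_mul,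
      mul_zero, add_zero]
    simpa using this
  · have hγun : γ (u : V) n = 0 := by rw [hγsym]; exact hn _
    simp only [map_add, map_smul, LinearMap.add_apply, LinearMap.smul_apply, hn, hγun, hℓn,
      smul_eq_mul, mul_zero, add_zero, mul_one]
    rw [hc]; ring

private lemma calA_coords {V : Type*} [AddCommGroup V] [Module ℝ V]
    (γ : V →ₗ[ℝ] V →ₗ[ℝ] ℝ) (hγsym : ∀ x y : V, γ x y = γ y x)
    (ℓ : V →ₗ[ℝ] ℝ) (ℓ2 : ℝ)
    (n : V) (hn : ∀ X : V, γ n X = 0) (hℓn : ℓ n = 1)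
    (w : V) (hww : γ w w + 2 * ℓ w + ℓ2 = 0)
    (X₁ X₂ : V) (h1 : γ w X₁ = -ℓ X₁) (h2 : γ w X₂ = -ℓ X₂)
    (s₁ t₁ s₂ t₂ : ℝ) :
    calA γ ℓ ℓ2 (X₁ + s₁ • n + t₁ • w, t₁) (X₂ + s₂ • n + t₂ • w, t₂) =
      γ X₁ X₂ + s₁ * t₂ + t₁ * s₂ := by
  have hXn : ∀ x : V, γ x n = 0 := fun x => by rw [hγsym]; exact hn x
  have hX1w : γ X₁ w = -ℓ X₁ := by rw [hγsym]; exact h1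
  have hww' : γ w w = -(2 * ℓ w + ℓ2) := by linarith
  simp only [calA, map_add, map_smul, LinearMap.add_apply, LinearMap.smul_apply, smul_eq_mul,
    hn, hXn, hX1w, h2, hww', hℓn]
  ring

set_option maxHeartbeats 3200000 in
theorem partial_isometry_exists_unique
    {V Vb : Type*} [AddCommGroup V] [Module ℝ V] [FiniteDimensional ℝ V]
    [AddCommGroup Vb] [Module ℝ Vb] [FiniteDimensional ℝ Vb]
    (m : ℕ) (hm : 2 ≤ m) (hV : finrank ℝ V = m) (hVb : finrank ℝ Vb = m)
    (γ : V →ₗ[ℝ] V →ₗ[ℝ] ℝ) (hγsym : ∀ x y : V, γ x y = γ y x)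
    (ℓ : V →ₗ[ℝ] ℝ) (ℓ2 : ℝ)
    (hA : ∀ v : V × ℝ, (∀ w : V × ℝ, calA γ ℓ ℓ2 v w = 0) → v = 0)
    (n : V) (hn : ∀ X : V, γ n X = 0) (hℓn : ℓ n = 1)
    (γb : Vb →ₗ[ℝ] Vb →ₗ[ℝ] ℝ) (hγbsym : ∀ x y : Vb, γb x y = γb y x)
    (ℓb : Vb →ₗ[ℝ] ℝ) (ℓ2b : ℝ)
    (hAb : ∀ v : Vb × ℝ, (∀ w : Vb × ℝ, calA γb ℓb ℓ2b v w = 0) → v = 0)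
    (nb : Vb) (hnb : ∀ X : Vb, γb nb X = 0) (hℓnb : ℓb nb = 1)
    (U : Submodule ℝ V) (hU : finrank ℝ U = m - 1)
    (hUnd : ∀ x ∈ U, (∀ y ∈ U, γ x y = 0) → x = 0)
    (Ub : Submodule ℝ Vb) (hUb : finrank ℝ Ub = m - 1)
    (hUbnd : ∀ x ∈ Ub, (∀ y ∈ Ub, γb x y = 0) → x = 0)
    (φ : U ≃ₗ[ℝ] Ub)
    (hφ : ∀ X Y : U, γb (φ X : Vb) (φ Y : Vb) = γ (X : V) (Y : V))
    (μ : ℝ) (hμ : μ ≠ 0) :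
    (∃! Ψ : (V × ℝ) →ₗ[ℝ] (Vb × ℝ),
        (∀ X : U, Ψ ((X : V), 0) = ((φ X : Vb), 0)) ∧
        (∀ v w : V × ℝ, calA γb ℓb ℓ2b (Ψ v) (Ψ w) = calA γ ℓ ℓ2 v w) ∧
        calA γb ℓb ℓ2b (nb, 0) (Ψ (n, 0)) = μ) ∧
    (∀ Ψ : (V × ℝ) →ₗ[ℝ] (Vb × ℝ),
        (∀ X : U, Ψ ((X : V), 0) = ((φ X : Vb), 0)) →
        (∀ v w : V × ℝ, calA γb ℓb ℓ2b (Ψ v) (Ψ w) = calA γ ℓ ℓ2 v w) →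
        calA γb ℓb ℓ2b (nb, 0) (Ψ (n, 0)) = μ →
        Function.Bijective Ψ) := by
  have hdimU : finrank ℝ U + 1 = finrank ℝ V := by rw [hU, hV]; omega
  have hdimUb : finrank ℝ Ub + 1 = finrank ℝ Vb := by rw [hUb, hVb]; omega
  obtain ⟨σ, w, hσU, hσn, hdec, hwU, hww⟩ := side_setup γ hγsym ℓ ℓ2 n hn hℓn U hdimU hUnd
  obtain ⟨σb, wb, hσbU, hσbn, hdecb, hwbU, hwwb⟩ :=
    side_setup γb hγbsym ℓb ℓ2b nb hnb hℓnb Ub hdimUb hUbnd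
  -- the lambda functionals
  set lam : V →ₗ[ℝ] ℝ := ℓ - ℓ ∘ₗ (U.subtype ∘ₗ σ) with hlamdef
  have hlam : ∀ v : V, lam v = ℓ v - ℓ (σ v : V) := fun v => rfl
  have hdec' : ∀ v : V, v = (σ v : V) + lam v • n := fun v => by rw [hlam]; exact hdec v
  have hlamn : lam n = 1 := by rw [hlam, hσn]; simp [hℓn]
  have hlamU : ∀ X : U, lam (X : V) = 0 := fun X => by rw [hlam, hσU]; ring
  -- coordinate maps on V × ℝ
  set Xc : (V × ℝ) →ₗ[ℝ] U :=
    σ ∘ₗ LinearMap.fst ℝ V ℝ - (LinearMap.toSpanSingleton ℝ U (σ w)) ∘ₗ LinearMap.snd ℝ V ℝ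
    with hXcdef
  set Sc : (V × ℝ) →ₗ[ℝ] ℝ := lam ∘ₗ LinearMap.fst ℝ V ℝ - lam w • LinearMap.snd ℝ V ℝ
    with hScdef
  have hXc : ∀ p : V × ℝ, Xc p = σ p.1 - p.2 • σ w := fun p => rfl
  have hSc : ∀ p : V × ℝ, Sc p = lam p.1 - lam w * p.2 := fun p => rfl
  have hrep : ∀ p : V × ℝ, p = ((Xc p : V) + Sc p • n + p.2 • w, p.2) := by
    intro p
    have e1 : ((Xc p : U) : V) = (p.1 - lam p.1 • n) - p.2 • (w - lam w • n) := by
      rw [hXc]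
      push_cast
      have d1 : (σ p.1 : V) = p.1 - lam p.1 • n := eq_sub_of_add_eq (hdec' p.1).symm
      have d2 : (σ w : V) = w - lam w • n := eq_sub_of_add_eq (hdec' w).symm
      rw [d1, d2]
    refine Prod.ext ?_ rfl
    rw [e1, hSc]
    module
  -- the map Ψ
  set Ψ : (V × ℝ) →ₗ[ℝ] (Vb × ℝ) := LinearMap.prod
      (Ub.subtype ∘ₗ (φ : U →ₗ[ℝ] Ub) ∘ₗ Xc
        + LinearMap.toSpanSingleton ℝ Vb nb ∘ₗ (μ⁻¹ • LinearMap.snd ℝ V ℝ)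
        + LinearMap.toSpanSingleton ℝ Vb wb ∘ₗ (μ • Sc))
      (μ • Sc) with hΨdef
  have hΨapp : ∀ p : V × ℝ,
      Ψ p = (((φ (Xc p) : Vb) + (μ⁻¹ * p.2) • nb + (μ * Sc p) • wb), μ * Sc p) := by
    intro p
    simp [hΨdef, LinearMap.prod_apply, LinearMap.add_apply, LinearMap.comp_apply,
      LinearMap.smul_apply, LinearMap.toSpanSingleton_apply, LinearMap.fst_apply,
      LinearMap.snd_apply, smul_eq_mul, smul_smul]
  -- condition (1)
  have hXcU : ∀ X : U, Xc ((X : V), 0) = X := by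
    intro X; rw [hXc]; simp [hσU]
  have hScU : ∀ X : U, Sc ((X : V), 0) = 0 := by
    intro X; rw [hSc]; simp [hlamU]
  have hcond1 : ∀ X : U, Ψ ((X : V), 0) = ((φ X : Vb), 0) := by
    intro X
    rw [hΨapp, hXcU, hScU]
    simp
  -- special values
  have hΨn : Ψ (n, 0) = (μ • wb, μ) := by
    rw [hΨapp]
    rw [hXc, hSc]
    simp [hσn, hlamn]
  have hΨw : Ψ (w, 1) = (μ⁻¹ • nb, 0) := by
    rw [hΨapp]
    rw [hXc, hSc]
    simp
  -- condition (2)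
  have hcond2 : ∀ p q : V × ℝ, calA γb ℓb ℓ2b (Ψ p) (Ψ q) = calA γ ℓ ℓ2 p q := by
    intro p q
    rw [hΨapp p, hΨapp q]
    rw [calA_coords γb hγbsym ℓb ℓ2b nb hnb hℓnb wb hwwb _ _
      (hwbU _ (φ (Xc p)).2) (hwbU _ (φ (Xc q)).2)]
    conv_rhs => rw [hrep p, hrep q]
    rw [calA_coords γ hγsym ℓ ℓ2 n hn hℓn w hww _ _
      (hwU _ (Xc p).2) (hwU _ (Xc q).2)]
    rw [hφ]
    field_simp
    ring
  -- condition (3)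
  have hcond3 : calA γb ℓb ℓ2b (nb, 0) (Ψ (n, 0)) = μ := by
    rw [hΨn]
    simp [calA, hnb, hℓnb]
  -- a pinning tool: orthogonality to Ub determines the Ub-component
  have hwbn : γb wb nb = 0 := by rw [hγbsym]; exact hnb wb
  have pin : ∀ (z : Vb) (t : ℝ), (∀ y ∈ Ub, γb z y + t * ℓb y = 0) →
      z = t • wb + (ℓb z - t * ℓb wb) • nb := by
    intro z t hz
    have hd := hdecb (z - t • wb)
    have hD : ∀ y ∈ Ub, γb ((σb (z - t • wb) : Ub) : Vb) y = 0 := by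
      intro y hy
      have e1 : γb (z - t • wb) y = 0 := by
        have o1 := hz y hy
        have o2 := hwbU y hy
        simp only [map_sub, map_smul, LinearMap.sub_apply, LinearMap.smul_apply, smul_eq_mul]
        rw [o2]; linarith
      calc γb ((σb (z - t • wb) : Ub) : Vb) y
          = γb ((σb (z - t • wb) : Ub) : Vb) y
            + (ℓb (z - t • wb) - ℓb ((σb (z - t • wb) : Ub) : Vb)) * γb nb y := by
              rw [hnb]; ring
        _ = γb (z - t • wb) y := by
              conv_rhs => rw [hd]
              simp only [map_add, map_smul, LinearMap.add_apply, LinearMap.smul_apply,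
                smul_eq_mul]
        _ = 0 := e1
    have hσ0 : ((σb (z - t • wb) : Ub) : Vb) = 0 :=
      hUbnd _ (σb (z - t • wb)).2 hD
    rw [hσ0] at hd
    have hval : ℓb (z - t • wb) - ℓb (0 : Vb) = ℓb z - t * ℓb wb := by
      simp [map_sub, map_smul]
    rw [hval] at hd
    rw [zero_add] at hd
    rw [← hd]
    abel
  -- uniqueness
  have huniq : ∀ Ψ' : (V × ℝ) →ₗ[ℝ] (Vb × ℝ),
      (∀ X : U, Ψ' ((X : V), 0) = ((φ X : Vb), 0)) →
      (∀ v w' : V × ℝ, calA γb ℓb ℓ2b (Ψ' v) (Ψ' w') = calA γ ℓ ℓ2 v w') →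
      calA γb ℓb ℓ2b (nb, 0) (Ψ' (n, 0)) = μ → Ψ' = Ψ := by
    intro Ψ' h1 h2 h3
    -- Step A : the image of (n,0)
    have hstepA : Ψ' (n, 0) = (μ • wb, μ) := by
      set z := Ψ' (n, 0) with hz
      have hb : z.2 = μ := by
        simp only [calA, hnb, hℓnb] at h3
        linarith
      have hOrthA : ∀ y ∈ Ub, γb z.1 y + μ * ℓb y = 0 := by
        intro y hy
        have e := h2 (n, 0) (((φ.symm ⟨y, hy⟩ : U) : V), 0)
        rw [← hz] at e
        rw [h1 (φ.symm ⟨y, hy⟩), φ.apply_symm_apply] at e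
        simp only [calA, hn, Submodule.coe_mk, mul_zero, zero_mul, add_zero, zero_add,
          mul_one] at e
        rw [hb] at e
        linarith
      have hNullA := h2 (n, 0) (n, 0)
      rw [← hz] at hNullA
      simp only [calA, hn, mul_zero, zero_mul, add_zero, zero_add, mul_one] at hNullA
      rw [hb] at hNullA
      have hz1 := pin z.1 μ hOrthA
      set r : ℝ := ℓb z.1 - μ * ℓb wb with hr
      have g1 : γb z.1 z.1 = μ * μ * γb wb wb := by
        conv_lhs => rw [hz1]
        simp only [map_add, map_smul, LinearMap.add_apply, LinearMap.smul_apply, smul_eq_mul,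
          hnb, hwbn]
        ring
      have g2 : ℓb z.1 = μ * ℓb wb + r := by rw [hr]; ring
      have hμr : μ * r = 0 := by
        rw [g1, g2] at hNullA
        linear_combination (hNullA - μ * μ * hwwb) / 2
      have hr0 : r = 0 := (mul_eq_zero.mp hμr).resolve_left hμ
      have : z.1 = μ • wb := by rw [hz1, hr0, zero_smul, add_zero]
      exact Prod.ext this hb
    -- Step B : the image of (w,1)
    have hstepB : Ψ' (w, 1) = (μ⁻¹ • nb, 0) := by
      set z := Ψ' (w, 1) with hz
      have hOrthB : ∀ y ∈ Ub, γb z.1 y + z.2 * ℓb y = 0 := by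
        intro y hy
        have e := h2 (w, 1) (((φ.symm ⟨y, hy⟩ : U) : V), 0)
        rw [← hz] at e
        rw [h1 (φ.symm ⟨y, hy⟩), φ.apply_symm_apply] at e
        have hγwX : γ w ((φ.symm ⟨y, hy⟩ : U) : V) = -ℓ ((φ.symm ⟨y, hy⟩ : U) : V) :=
          hwU _ (φ.symm ⟨y, hy⟩).2
        simp only [calA, hγwX, Submodule.coe_mk, mul_zero, zero_mul, add_zero, zero_add,
          mul_one, one_mul] at e
        linarith
      have hNullB := h2 (w, 1) (w, 1)
      rw [← hz] at hNullB
      simp only [calA, one_mul, mul_one] at hNullB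
      have hPairB := h2 (n, 0) (w, 1)
      rw [← hz, hstepA] at hPairB
      simp only [calA, hn, hℓn, map_smul, LinearMap.smul_apply, smul_eq_mul, mul_zero,
        zero_mul, add_zero, zero_add, mul_one, one_mul] at hPairB
      have hz1 := pin z.1 z.2 hOrthB
      set ρ : ℝ := ℓb z.1 - z.2 * ℓb wb with hρ
      have g1 : γb z.1 z.1 = z.2 * z.2 * γb wb wb := by
        conv_lhs => rw [hz1]
        simp only [map_add, map_smul, LinearMap.add_apply, LinearMap.smul_apply, smul_eq_mul,
          hnb, hwbn]
        ring
      have g2 : ℓb z.1 = z.2 * ℓb wb + ρ := by rw [hρ]; ring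
      have g3 : γb wb z.1 = z.2 * γb wb wb := by
        conv_lhs => rw [hz1]
        simp only [map_add, map_smul, hwbn, smul_eq_mul]
        ring
      have hμρ : μ * ρ = 1 := by
        rw [g3, g2] at hPairB
        linear_combination hPairB - μ * z.2 * hwwb
      have hρinv : ρ = μ⁻¹ :=
        mul_left_cancel₀ hμ (by rw [hμρ, mul_inv_cancel₀ hμ])
      have hρ0 : ρ ≠ 0 := by rw [hρinv]; exact inv_ne_zero hμ
      have hz2 : z.2 = 0 := by
        have h2ρ : z.2 * ρ = 0 := by
          rw [g1, g2] at hNullB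
          linear_combination (hNullB - z.2 * z.2 * hwwb + hww) / 2
        exact (mul_eq_zero.mp h2ρ).resolve_right hρ0
      have : z.1 = μ⁻¹ • nb := by
        rw [hz1, hz2, hρinv, zero_smul, zero_add]
      exact Prod.ext this hz2
    -- Step C : agreement everywhere
    have hsplit : ∀ (X : U) (s t : ℝ),
        (((X : V) + s • n + t • w : V), t) = (((X : V), (0:ℝ)) + s • (n, 0) + t • (w, 1) : V × ℝ) := by
      intro X s t
      refine Prod.ext (by simp) (by simp)
    apply LinearMap.ext
    intro p
    have key : ∀ Ψ'' : (V × ℝ) →ₗ[ℝ] (Vb × ℝ),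
        (∀ X : U, Ψ'' ((X : V), 0) = ((φ X : Vb), 0)) →
        Ψ'' (n, 0) = (μ • wb, μ) → Ψ'' (w, 1) = (μ⁻¹ • nb, 0) →
        Ψ'' p = (((φ (Xc p) : Vb), 0) + Sc p • (μ • wb, μ) + p.2 • (μ⁻¹ • nb, 0) : Vb × ℝ) := by
      intro Ψ'' k1 k2 k3
      conv_lhs => rw [hrep p, hsplit]
      rw [map_add, map_add, map_smul, map_smul, k1, k2, k3]
    rw [key Ψ' h1 hstepA hstepB, key Ψ hcond1 hΨn hΨw]
  refine ⟨⟨Ψ, ⟨hcond1, hcond2, hcond3⟩, fun Ψ' h' => huniq Ψ' h'.1 h'.2.1 h'.2.2⟩, ?_⟩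
  -- bijectivity of any such map
  intro Ψ' h1 h2 h3
  have hinj : Function.Injective Ψ' := by
    rw [← LinearMap.ker_eq_bot]
    rw [LinearMap.ker_eq_bot']
    intro v hv
    apply hA
    intro w'
    rw [← h2 v w', hv]
    simp [calA]
  refine ⟨hinj, ?_⟩
  have hfr : finrank ℝ (V × ℝ) = finrank ℝ (Vb × ℝ) := by
    rw [Module.finrank_prod, Module.finrank_prod, hV, hVb]
  exact (LinearMap.injective_iff_surjective_of_finrank_eq_finrank hfr).mp hinj
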